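/- Let u : [0,L] → ℝ be C², L-periodic, with zero average. Then for every h > 0, ∫₀^L |u(x+h) − u(x)|³ dx ≤ c h² (∫₀^L u² dx)^{7/8} (∫₀^L (∂_x² u)² dx)^{5/8} for a universal constant c. -/

import Mathlib

open Real intervalIntegral

set_option maxHeartbeats 1000000

section Helpers

open MeasureTheory

private lemma cs_int {a b : ℝ} (hab : a ≤ b) {f g : ℝ → ℝ} (hf : Continuous f)
    (hg : Continuous g) :
    (∫ x in a..b, f x * g x) ≤
      Real.sqrt (∫ x in a..b, f x ^ 2) * Real.sqrt (∫ x in a..b, g x ^ 2) := by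
  set F := ∫ x in a..b, f x ^ 2 with hFdef
  set G := ∫ x in a..b, g x ^ 2 with hGdef
  set I := ∫ x in a..b, f x * g x with hIdef
  have hF : 0 ≤ F := intervalIntegral.integral_nonneg hab fun x _ => sq_nonneg _
  have hG : 0 ≤ G := intervalIntegral.integral_nonneg hab fun x _ => sq_nonneg _
  have key : ∀ t : ℝ, 0 ≤ F * (t * t) + (2 * I) * t + G := by
    intro t
    have h1 : (0:ℝ) ≤ ∫ x in a..b, (t * f x + g x) ^ 2 :=
      intervalIntegral.integral_nonneg hab fun x _ => sq_nonneg _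
    have h2 : (∫ x in a..b, (t * f x + g x) ^ 2)
        = F * (t * t) + (2 * I) * t + G := by
      have e : ∀ x, (t * f x + g x) ^ 2
          = t ^ 2 * f x ^ 2 + 2 * t * (f x * g x) + g x ^ 2 := fun x => by ring
      simp_rw [e]
      rw [intervalIntegral.integral_add, intervalIntegral.integral_add,
        intervalIntegral.integral_const_mul, intervalIntegral.integral_const_mul]
      · ring
      · exact ((continuous_const.mul (hf.pow 2))).intervalIntegrable _ _
      · exact ((continuous_const.mul (hf.mul hg))).intervalIntegrable _ _
      · exact (((continuous_const.mul (hf.pow 2))).add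
          ((continuous_const.mul (hf.mul hg)))).intervalIntegrable _ _
      · exact (hg.pow 2).intervalIntegrable _ _
    rw [h2] at h1; exact h1
  have hd : discrim F (2 * I) G ≤ 0 := discrim_le_zero key
  rw [discrim] at hd
  have hI2 : I ^ 2 ≤ F * G := by nlinarith
  calc I ≤ |I| := le_abs_self I
    _ = Real.sqrt (I ^ 2) := (Real.sqrt_sq_eq_abs I).symm
    _ ≤ Real.sqrt (F * G) := Real.sqrt_le_sqrt hI2
    _ = Real.sqrt F * Real.sqrt G := Real.sqrt_mul hF G

private lemma cs_abs {a b : ℝ} (hab : a ≤ b) {f g : ℝ → ℝ} (hf : Continuous f)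
    (hg : Continuous g) :
    (∫ x in a..b, |f x * g x|) ≤
      Real.sqrt (∫ x in a..b, f x ^ 2) * Real.sqrt (∫ x in a..b, g x ^ 2) := by
  have h := cs_int hab hf.abs hg.abs
  simp_rw [← abs_mul, sq_abs] at h
  exact h

end Helpers

theorem cube_difference_estimate :
    ∃ c : ℝ, 0 < c ∧ ∀ (L : ℝ) (u : ℝ → ℝ) (h : ℝ), 0 < L → 0 < h →
      ContDiff ℝ 2 u → Function.Periodic u L →
      (∫ x in (0:ℝ)..L, u x) = 0 →
      (∫ x in (0:ℝ)..L, |u (x + h) - u x| ^ 3)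
        ≤ c * h ^ 2 * (∫ x in (0:ℝ)..L, (u x) ^ 2) ^ ((7:ℝ)/8)
            * (∫ x in (0:ℝ)..L, (deriv (deriv u) x) ^ 2) ^ ((5:ℝ)/8) := by
  refine ⟨4, by norm_num, ?_⟩
  intro L u h hL hh hu hper hmean
  -- regularity facts
  have hd1 : Differentiable ℝ u := hu.differentiable (by norm_num)
  have hc0 : Continuous u := hd1.continuous
  have hu' : ContDiff ℝ 1 (deriv u) := by
    have h2 : ContDiff ℝ ((1:ℕ) + 1) u := by exact_mod_cast hu
    exact_mod_cast (contDiff_succ_iff_deriv.mp h2).2.2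
  have hd2 : Differentiable ℝ (deriv u) := hu'.differentiable (by norm_num)
  have hc1 : Continuous (deriv u) := hd2.continuous
  have hc2 : Continuous (deriv (deriv u)) := by
    have h1 : ContDiff ℝ ((0:ℕ) + 1) (deriv u) := by exact_mod_cast hu'
    exact ((contDiff_succ_iff_deriv.mp h1).2.2).continuous
  have hperD : Function.Periodic (deriv u) L := by
    intro x
    have e : (fun y => u (y + L)) = u := funext fun y => hper y
    rw [show deriv u (x + L) = deriv (fun y => u (y + L)) x from (deriv_comp_add_const u L x).symm, e]
  set A := ∫ x in (0:ℝ)..L, u x ^ 2 with hAdef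
  set B := ∫ x in (0:ℝ)..L, (deriv (deriv u) x) ^ 2 with hBdef
  set D := ∫ x in (0:ℝ)..L, (deriv u x) ^ 2 with hDdef
  have hA : 0 ≤ A := intervalIntegral.integral_nonneg hL.le fun x _ => sq_nonneg _
  have hB : 0 ≤ B := intervalIntegral.integral_nonneg hL.le fun x _ => sq_nonneg _
  have hD : 0 ≤ D := intervalIntegral.integral_nonneg hL.le fun x _ => sq_nonneg _
  -- boundary values
  have hbu : u L = u 0 := by simpa using hper 0
  have hbu' : deriv u L = deriv u 0 := by simpa using hperD 0
  -- interpolation : D ^ 2 ≤ A * B via integration by parts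
  have hIBP : (∫ x in (0:ℝ)..L, u x * deriv (deriv u) x)
      = u L * deriv u L - u 0 * deriv u 0 - ∫ x in (0:ℝ)..L, deriv u x * deriv u x :=
    intervalIntegral.integral_mul_deriv_eq_deriv_mul (fun x _ => (hd1 x).hasDerivAt)
      (fun x _ => (hd2 x).hasDerivAt) (hc1.intervalIntegrable _ _) (hc2.intervalIntegrable _ _)
  have hDD : (∫ x in (0:ℝ)..L, deriv u x * deriv u x) = D := by
    rw [hDdef]; simp_rw [sq]
  have hDeq : D = - ∫ x in (0:ℝ)..L, u x * deriv (deriv u) x := by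
    rw [hIBP, hbu, hbu', hDD]; ring
  have hDle : D ≤ Real.sqrt A * Real.sqrt B := by
    have hcs := cs_int hL.le (f := fun x => -u x) (g := fun x => deriv (deriv u) x) hc0.neg hc2
    simp only [neg_mul, intervalIntegral.integral_neg, neg_sq] at hcs
    rw [hDeq]
    exact hcs
  have hD2 : D ^ 2 ≤ A * B := by
    nlinarith [Real.sq_sqrt hA, Real.sq_sqrt hB, Real.sqrt_nonneg A, Real.sqrt_nonneg B]
  -- existence of a zero of u
  have hx0 : ∃ x₀ ∈ Set.Icc (0:ℝ) L, u x₀ = 0 := by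
    have hEx1 : ∃ a ∈ Set.Icc (0:ℝ) L, u a ≤ 0 := by
      by_contra hcon
      push_neg at hcon
      have hpos := intervalIntegral.intervalIntegral_pos_of_pos_on
        (hc0.intervalIntegrable 0 L) (fun x hx => hcon x ⟨hx.1.le, hx.2.le⟩) hL
      rw [hmean] at hpos
      exact lt_irrefl 0 hpos
    have hEx2 : ∃ b ∈ Set.Icc (0:ℝ) L, 0 ≤ u b := by
      by_contra hcon
      push_neg at hcon
      have hpos := intervalIntegral.intervalIntegral_pos_of_pos_on (f := fun x => -u x)
        (hc0.neg.intervalIntegrable 0 L)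
        (fun x hx => neg_pos.mpr (hcon x ⟨hx.1.le, hx.2.le⟩)) hL
      rw [intervalIntegral.integral_neg, hmean] at hpos
      simp at hpos
    obtain ⟨a, ha, hua⟩ := hEx1
    obtain ⟨b, hb, hub⟩ := hEx2
    have hsub : Set.uIcc a b ⊆ Set.Icc 0 L := Set.uIcc_subset_Icc ha hb
    have h0mem : (0:ℝ) ∈ Set.uIcc (u a) (u b) := Set.mem_uIcc.mpr (Or.inl ⟨hua, hub⟩)
    obtain ⟨x₀, hx₀, hux₀⟩ := intermediate_value_uIcc (f := u) (a := a) (b := b) (Continuous.continuousOn hc0) h0mem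
    exact ⟨x₀, hsub hx₀, hux₀⟩
  obtain ⟨x₀, hx₀mem, hux₀⟩ := hx0
  -- Agmon-type pointwise bound on a window
  have hptb : ∀ y : ℝ, x₀ ≤ y → y ≤ x₀ + L → u y ^ 2 ≤ 2 * Real.sqrt A * Real.sqrt D := by
    intro y hy1 hy2
    have hder : ∀ t ∈ Set.uIcc x₀ y, HasDerivAt (fun s => u s ^ 2) (2 * u t * deriv u t) t := by
      intro t _
      have := ((hd1 t).hasDerivAt).fun_pow 2
      simpa [pow_one] using this
    have hc3 : Continuous fun t => 2 * u t * deriv u t := by fun_prop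
    have hftc : (∫ t in x₀..y, 2 * u t * deriv u t) = u y ^ 2 - u x₀ ^ 2 :=
      intervalIntegral.integral_eq_sub_of_hasDerivAt hder
        (hc3.intervalIntegrable _ _)
    have h1 : u y ^ 2 = ∫ t in x₀..y, 2 * u t * deriv u t := by
      rw [hftc, hux₀]; ring
    have habsc : Continuous fun t => |2 * u t * deriv u t| := hc3.abs
    calc u y ^ 2 = ∫ t in x₀..y, 2 * u t * deriv u t := h1
      _ ≤ |∫ t in x₀..y, 2 * u t * deriv u t| := le_abs_self _
      _ ≤ ∫ t in x₀..y, |2 * u t * deriv u t| :=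
          intervalIntegral.abs_integral_le_integral_abs hy1
      _ ≤ ∫ t in x₀..x₀ + L, |2 * u t * deriv u t| :=
          intervalIntegral.integral_mono_interval le_rfl hy1 hy2
            (Filter.Eventually.of_forall fun t => abs_nonneg _)
            (habsc.intervalIntegrable _ _)
      _ = ∫ t in (0:ℝ)..L, |2 * u t * deriv u t| := by
          have hperf : Function.Periodic (fun t => |2 * u t * deriv u t|) L := fun t => by
            simp only [hper t, hperD t]
          simpa using hperf.intervalIntegral_add_eq x₀ 0
      _ = 2 * ∫ t in (0:ℝ)..L, |u t * deriv u t| := by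
          rw [← intervalIntegral.integral_const_mul]
          congr 1
          funext t
          rw [mul_assoc, abs_mul]
          norm_num
      _ ≤ 2 * (Real.sqrt A * Real.sqrt D) := by
          have := cs_abs hL.le hc0 hc1
          linarith
      _ = 2 * Real.sqrt A * Real.sqrt D := by ring
  -- full pointwise bound
  have hpt : ∀ x : ℝ, u x ^ 2 ≤ 2 * Real.sqrt A * Real.sqrt D := by
    intro x
    set n : ℤ := ⌊(x - x₀) / L⌋ with hn
    have h1 : (n:ℝ) ≤ (x - x₀) / L := Int.floor_le _
    have h2 : (x - x₀) / L < n + 1 := Int.lt_floor_add_one _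
    have h1' : (n:ℝ) * L ≤ x - x₀ := by
      rw [← le_div_iff₀ hL]; exact h1
    have h2' : x - x₀ < ((n:ℝ) + 1) * L := by
      rw [← div_lt_iff₀ hL]; exact h2
    have hy : u (x - n * L) = u x := hper.sub_int_mul_eq n
    have := hptb (x - n * L) (by linarith) (by linarith)
    rwa [hy] at this
  set s := Real.sqrt (2 * Real.sqrt A * Real.sqrt D) with hsdef
  have hs0 : 0 ≤ s := Real.sqrt_nonneg _
  have hsb : ∀ x, |u x| ≤ s := fun x => by
    rw [← Real.sqrt_sq_eq_abs]; exact Real.sqrt_le_sqrt (hpt x)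
  have hs2 : s ^ 2 = 2 * Real.sqrt A * Real.sqrt D :=
    Real.sq_sqrt (by positivity)
  -- primitive of (deriv u)^2
  set g : ℝ → ℝ := fun t => (deriv u t) ^ 2 with hgdef
  have hgc : Continuous g := hc1.pow 2
  set G : ℝ → ℝ := fun x => ∫ t in (0:ℝ)..x, g t with hGdef
  have hGc : Continuous G :=
    intervalIntegral.continuous_primitive (fun a b => hgc.intervalIntegrable a b) 0
  have hGeq : ∀ x y : ℝ, (∫ t in x..y, g t) = G y - G x := by
    intro x y
    have hadd := intervalIntegral.integral_add_adjacent_intervals (μ := MeasureTheory.volume)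
      (hgc.intervalIntegrable 0 x) (hgc.intervalIntegrable x y)
    simp only [hGdef]
    linarith
  have hGper : ∀ y : ℝ, G (y + L) - G y = D := by
    intro y
    rw [← hGeq]
    have hpg : Function.Periodic g L := fun t => by simp only [hgdef, hperD t]
    rw [hDdef]
    simpa using hpg.intervalIntegral_add_eq y 0
  -- averaged difference-quotient identity : ∫₀ᴸ (G(x+h) - G x) dx = h * D
  have hGh : Continuous fun x => G (x + h) := by fun_prop
  have hstep2 : (∫ x in (0:ℝ)..L, (G (x + h) - G x)) = h * D := by
    rw [intervalIntegral.integral_sub (hGh.intervalIntegrable _ _) (hGc.intervalIntegrable _ _)]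
    rw [intervalIntegral.integral_comp_add_right (fun x => G x) h]
    have e1 := intervalIntegral.integral_add_adjacent_intervals (μ := MeasureTheory.volume)
      (hGc.intervalIntegrable h L) (hGc.intervalIntegrable L (L + h))
    have e2 := intervalIntegral.integral_add_adjacent_intervals (μ := MeasureTheory.volume)
      (hGc.intervalIntegrable 0 h) (hGc.intervalIntegrable h L)
    have e3 : (∫ x in L..(L + h), G x) = ∫ x in (0:ℝ)..h, G (x + L) := by
      rw [intervalIntegral.integral_comp_add_right (fun x => G x) L]
      norm_num [add_comm]
    have e4 : (∫ x in (0:ℝ)..h, G (x + L)) - (∫ x in (0:ℝ)..h, G x)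
        = ∫ x in (0:ℝ)..h, (G (x + L) - G x) :=
      (intervalIntegral.integral_sub
        ((show Continuous fun x => G (x + L) by fun_prop).intervalIntegrable _ _)
        (hGc.intervalIntegrable _ _)).symm
    have e5 : (∫ x in (0:ℝ)..h, (G (x + L) - G x)) = h * D := by
      rw [intervalIntegral.integral_congr (g := fun _ => D) (fun x _ => hGper x)]
      simp [mul_comm]
    have e0 : (0:ℝ) + h = h := zero_add h
    rw [e0]
    linarith
  -- pointwise Cauchy-Schwarz for the difference
  have hkey1 : ∀ x : ℝ, (u (x + h) - u x) ^ 2 ≤ h * (G (x + h) - G x) := by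
    intro x
    have hxh : x ≤ x + h := by linarith
    have hdint : u (x + h) - u x = ∫ t in x..(x + h), deriv u t :=
      (intervalIntegral.integral_deriv_eq_sub (fun t _ => hd1 t)
        (hc1.intervalIntegrable _ _)).symm
    have hIpos : 0 ≤ G (x + h) - G x := by
      rw [← hGeq]
      exact intervalIntegral.integral_nonneg hxh fun t _ => sq_nonneg _
    have habs : |u (x + h) - u x| ≤ Real.sqrt h * Real.sqrt (G (x + h) - G x) := by
      rw [hdint]
      calc |∫ t in x..(x + h), deriv u t| ≤ ∫ t in x..(x + h), |deriv u t| :=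
            intervalIntegral.abs_integral_le_integral_abs hxh
        _ = ∫ t in x..(x + h), 1 * |deriv u t| := by simp
        _ ≤ Real.sqrt (∫ t in x..(x + h), (1:ℝ) ^ 2)
              * Real.sqrt (∫ t in x..(x + h), |deriv u t| ^ 2) :=
            cs_int hxh continuous_const hc1.abs
        _ = Real.sqrt h * Real.sqrt (G (x + h) - G x) := by
            have e1 : (∫ t in x..(x + h), (1:ℝ) ^ 2) = h := by simp
            have e2 : (∫ t in x..(x + h), |deriv u t| ^ 2) = G (x + h) - G x := by
              simp_rw [sq_abs]
              exact hGeq x (x + h)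
            rw [e1, e2]
    nlinarith [abs_nonneg (u (x + h) - u x), sq_abs (u (x + h) - u x),
      Real.sq_sqrt hh.le, Real.sq_sqrt hIpos, Real.sqrt_nonneg h,
      Real.sqrt_nonneg (G (x + h) - G x), habs]
  -- pointwise cube bound
  have hcube : ∀ x ∈ Set.Icc (0:ℝ) L,
      |u (x + h) - u x| ^ 3 ≤ 2 * s * h * (G (x + h) - G x) := by
    intro x _
    have hb : |u (x + h) - u x| ≤ 2 * s := by
      have h1 := hsb (x + h)
      have h2 := hsb x
      have := abs_sub (u (x + h)) (u x)
      calc |u (x + h) - u x| ≤ |u (x + h)| + |u x| := abs_sub _ _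
        _ ≤ 2 * s := by linarith
    have h2 := hkey1 x
    have h3 : |u (x + h) - u x| ^ 3 = |u (x + h) - u x| * (u (x + h) - u x) ^ 2 := by
      rw [← sq_abs]; ring
    rw [h3]
    calc |u (x + h) - u x| * (u (x + h) - u x) ^ 2
        ≤ (2 * s) * (h * (G (x + h) - G x)) :=
          mul_le_mul hb h2 (sq_nonneg _) (by positivity)
      _ = 2 * s * h * (G (x + h) - G x) := by ring
  -- integrate
  have hmain : (∫ x in (0:ℝ)..L, |u (x + h) - u x| ^ 3) ≤ 2 * s * h * (h * D) := by
    have hcc : Continuous fun x => |u (x + h) - u x| ^ 3 := by fun_prop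
    have hint1 : IntervalIntegrable (fun x => |u (x + h) - u x| ^ 3) MeasureTheory.volume 0 L :=
      hcc.intervalIntegrable _ _
    have hint2 : IntervalIntegrable (fun x => 2 * s * h * (G (x + h) - G x))
        MeasureTheory.volume 0 L :=
      (continuous_const.mul (hGh.sub hGc)).intervalIntegrable _ _
    calc (∫ x in (0:ℝ)..L, |u (x + h) - u x| ^ 3)
        ≤ ∫ x in (0:ℝ)..L, 2 * s * h * (G (x + h) - G x) :=
          intervalIntegral.integral_mono_on hL.le hint1 hint2 hcube
      _ = 2 * s * h * ∫ x in (0:ℝ)..L, (G (x + h) - G x) :=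
          intervalIntegral.integral_const_mul _ _
      _ = 2 * s * h * (h * D) := by rw [hstep2]
  -- final algebra
  have hA78 : 0 ≤ A ^ ((7:ℝ)/8) := Real.rpow_nonneg hA _
  have hB58 : 0 ≤ B ^ ((5:ℝ)/8) := Real.rpow_nonneg hB _
  have key : 2 * s * D ≤ 4 * (A ^ ((7:ℝ)/8) * B ^ ((5:ℝ)/8)) := by
    apply le_of_pow_le_pow_left₀ (n := 8) (by norm_num) (by positivity)
    have hA8 : (A ^ ((7:ℝ)/8)) ^ (8:ℕ) = A ^ (7:ℕ) := by
      rw [← Real.rpow_natCast (A ^ ((7:ℝ)/8)) 8, ← Real.rpow_mul hA,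
        show ((7:ℝ)/8) * (8:ℕ) = ((7:ℕ):ℝ) by norm_num, Real.rpow_natCast]
    have hB8 : (B ^ ((5:ℝ)/8)) ^ (8:ℕ) = B ^ (5:ℕ) := by
      rw [← Real.rpow_natCast (B ^ ((5:ℝ)/8)) 8, ← Real.rpow_mul hB,
        show ((5:ℝ)/8) * (8:ℕ) = ((5:ℕ):ℝ) by norm_num, Real.rpow_natCast]
    have hsA : Real.sqrt A ^ (2:ℕ) = A := Real.sq_sqrt hA
    have hsD : Real.sqrt D ^ (2:ℕ) = D := Real.sq_sqrt hD
    have hs8 : s ^ (8:ℕ) = 16 * A ^ 2 * D ^ 2 := by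
      calc s ^ (8:ℕ) = (s ^ 2) ^ 4 := by ring
        _ = (2 * Real.sqrt A * Real.sqrt D) ^ 4 := by rw [hs2]
        _ = 16 * (Real.sqrt A ^ 2) ^ 2 * (Real.sqrt D ^ 2) ^ 2 := by ring
        _ = 16 * A ^ 2 * D ^ 2 := by rw [hsA, hsD]
    have hLpow : (2 * s * D) ^ (8:ℕ) = 4096 * A ^ 2 * D ^ 10 := by
      calc (2 * s * D) ^ (8:ℕ) = 256 * s ^ 8 * D ^ 8 := by ring
        _ = 256 * (16 * A ^ 2 * D ^ 2) * D ^ 8 := by rw [hs8]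
        _ = 4096 * A ^ 2 * D ^ 10 := by ring
    have hR : (4 * (A ^ ((7:ℝ)/8) * B ^ ((5:ℝ)/8))) ^ (8:ℕ)
        = 65536 * A ^ (7:ℕ) * B ^ (5:ℕ) := by
      rw [mul_pow, mul_pow, hA8, hB8]
      ring
    rw [hLpow, hR]
    have hD10 : D ^ 10 ≤ A ^ 5 * B ^ 5 := by
      calc D ^ 10 = (D ^ 2) ^ 5 := by ring
        _ ≤ (A * B) ^ 5 := pow_le_pow_left₀ (sq_nonneg D) hD2 5
        _ = A ^ 5 * B ^ 5 := by ring
    have h7 : A ^ 2 * D ^ 10 ≤ A ^ 2 * (A ^ 5 * B ^ 5) :=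
      mul_le_mul_of_nonneg_left hD10 (pow_nonneg hA 2)
    have h8 : A ^ 2 * (A ^ 5 * B ^ 5) = A ^ 7 * B ^ 5 := by ring
    have h9 : 0 ≤ A ^ 7 * B ^ 5 := by positivity
    linarith
  have hfinal : 2 * s * h * (h * D) ≤ 4 * h ^ 2 * A ^ ((7:ℝ)/8) * B ^ ((5:ℝ)/8) := by
    calc 2 * s * h * (h * D) = (2 * s * D) * h ^ 2 := by ring
      _ ≤ (4 * (A ^ ((7:ℝ)/8) * B ^ ((5:ℝ)/8))) * h ^ 2 :=
          mul_le_mul_of_nonneg_right key (sq_nonneg h)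
      _ = 4 * h ^ 2 * A ^ ((7:ℝ)/8) * B ^ ((5:ℝ)/8) := by ring
  exact hmain.trans hfinal
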